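/- arXiv:1506.06818 — 4 statements merged into one kernel-verified Lean document; each statement's English description precedes it below -/
import Mathlib

section
/- For any finite graph G=(V,E), spin configuration σ ∈ {-1,+1}^V with associated 2-state Potts configuration σ̂ (via identification 1↔1, -1↔2), coupling constants J, magnetic field h, inverse temperature β, and p_{ij} = 1 - exp(-2βJ_{ij}), one has exp(-2β(H^Potts(σ̂) + Σ_{{i,j}∈E} J_{ij})) = Σ_{ω ∈ {0,1}^E} (Π_{{i,j}: ω_{ij}=1} p_{ij} δ_{σ_i,σ_j}) (Π_{{i,j}: ω_{ij}=0} (1-p_{ij})) · exp(β Σ_{i∈V} h_i (δ_{σ_i,1} - δ_{σ_i,-1})). -/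
open Finset

noncomputable section

variable {V : Type}

/-- The spin value (±1) attached to a Boolean spin (`true ↔ +1`, `false ↔ -1`). -/
def spin (b : Bool) : ℝ := if b then 1 else -1

/-- The subgraph of `G` whose open edges are the edges in `F`. -/
def openSub (G : SimpleGraph V) (F : Finset (Sym2 V)) : SimpleGraph V where
  Adj i j := G.Adj i j ∧ s(i, j) ∈ F
  symm := by
    constructor
    intro i j h
    exact ⟨h.1.symm, by rw [Sym2.eq_swap]; exact h.2⟩
  loopless := ⟨fun i h => G.irrefl h.1⟩

instance [Fintype V] (H : SimpleGraph V) : Fintype H.ConnectedComponent := by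
  classical exact Fintype.ofSurjective H.connectedComponentMk Quot.exists_rep

/-- The vertex set of a connected component, as a `Finset`. -/
def compSupp [Fintype V] (H : SimpleGraph V) (c : H.ConnectedComponent) : Finset V := by
  classical exact Finset.univ.filter fun v => H.connectedComponentMk v = c

/-- Kronecker delta `δ_{σ_i,σ_j}` of a configuration on an (unordered) edge. -/
def eDelta {S : Type} [DecidableEq S] (σ : V → S) : Sym2 V → ℝ :=
  Sym2.lift ⟨fun i j => if σ i = σ j then 1 else 0, fun _ _ => by simp [eq_comm]⟩

/-- Product of spins `σ_i σ_j` on an (unordered) edge. -/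
def eProd (σ : V → Bool) : Sym2 V → ℝ :=
  Sym2.lift ⟨fun i j => spin (σ i) * spin (σ j), fun _ _ => mul_comm _ _⟩

/-- The consistency indicator `Δ(σ,ω)`: equal to `1` iff `σ` is constant on
every open edge of the configuration `F`. -/
def Delta (G : SimpleGraph V) (F : Finset (Sym2 V)) (σ : V → Bool) : ℝ := by
  classical exact if ∀ i j, G.Adj i j → s(i, j) ∈ F → σ i = σ j then 1 else 0

/-- The Bernoulli factor `B_J(ω) = ∏_{e open} p_e ∏_{e closed} (1-p_e)`. -/
def bern [Fintype V] [DecidableEq V] (G : SimpleGraph V) [DecidableRel G.Adj]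
    (p : Sym2 V → ℝ) (F : Finset (Sym2 V)) : ℝ :=
  (∏ e ∈ F, p e) * ∏ e ∈ G.edgeFinset \ F, (1 - p e)

/-- Lemma 5 (lema-fev1): expansion of the 2-state Potts Boltzmann factor with
free boundary conditions into Bernoulli/Kronecker factors. -/
theorem statement0 [Fintype V] [DecidableEq V]
    (G : SimpleGraph V) [DecidableRel G.Adj]
    (β : ℝ) (hβ : 0 < β)
    (J : Sym2 V → ℝ) (hJ : ∀ e ∈ G.edgeFinset, 0 ≤ J e)
    (h : V → ℝ) (σ : V → Bool)
    (p : Sym2 V → ℝ) (hp : ∀ e, p e = 1 - Real.exp (-(2 * β) * J e)) :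
    Real.exp (-(2 * β) *
        ((-(∑ e ∈ G.edgeFinset, J e * eDelta σ e)
            - ∑ i, h i / 2 * spin (σ i)) + ∑ e ∈ G.edgeFinset, J e))
      = ∑ F ∈ G.edgeFinset.powerset,
          (∏ e ∈ F, p e * eDelta σ e) * (∏ e ∈ G.edgeFinset \ F, (1 - p e)) *
            Real.exp (β * ∑ i, h i * spin (σ i)) := by

  classical
  have key : ∀ e ∈ G.edgeFinset,
      Real.exp (2 * β * (J e * eDelta σ e) - 2 * β * J e)
        = p e * eDelta σ e + (1 - p e) := by
    intro e he
    induction e using Sym2.ind with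
    | _ i j =>
      simp only [eDelta, Sym2.lift_mk, hp]
      by_cases hij : σ i = σ j
      · simp [hij]
      · simp only [hij, if_false, mul_zero, zero_sub, sub_zero]
        rw [sub_sub_cancel]
        ring_nf
  have hE : -(2 * β) *
        ((-(∑ e ∈ G.edgeFinset, J e * eDelta σ e)
            - ∑ i, h i / 2 * spin (σ i)) + ∑ e ∈ G.edgeFinset, J e)
      = (∑ e ∈ G.edgeFinset, (2 * β * (J e * eDelta σ e) - 2 * β * J e))
          + β * ∑ i, h i * spin (σ i) := by
    rw [Finset.sum_sub_distrib, ← Finset.mul_sum, ← Finset.mul_sum]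
    have : ∑ i, h i / 2 * spin (σ i) = (∑ i, h i * spin (σ i)) / 2 := by
      rw [Finset.sum_div]; congr 1; ext i; ring
    rw [this]; ring
  rw [hE, Real.exp_add, Real.exp_sum, Finset.prod_congr rfl key, Finset.prod_add,
    Finset.sum_mul]


end
end

section
/- The edge-marginal of the Edwards-Sokal measure is the random-cluster measure with external field: for every ω ∈ {0,1}^E, Σ_{σ ∈ {-1,+1}^V} ν_{p,h,G}(σ,ω) = φ_{p,h,G}(ω), where φ_{p,h,G}(ω) ∝ B_J(ω) Π_{α=1}^{k(ω,G)} 2cosh(β Σ_{i∈K_α} h_i). -/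
open Finset

noncomputable section

variable {V : Type}

/-- The Edwards–Sokal weight `B_J(ω) Δ(σ,ω) exp(β Σ_i h_i (δ_{σ_i,1} - δ_{σ_i,-1}))`. -/
def esW [Fintype V] [DecidableEq V] (G : SimpleGraph V) [DecidableRel G.Adj]
    (β : ℝ) (p : Sym2 V → ℝ) (h : V → ℝ) (σ : V → Bool) (F : Finset (Sym2 V)) : ℝ :=
  bern G p F * Delta G F σ * Real.exp (β * ∑ i, h i * spin (σ i))

/-- The random-cluster weight `B_J(ω) ∏_α 2cosh(β Σ_{i∈K_α} h_i)`. -/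
def rcW [Fintype V] [DecidableEq V] (G : SimpleGraph V) [DecidableRel G.Adj]
    (β : ℝ) (p : Sym2 V → ℝ) (h : V → ℝ) (F : Finset (Sym2 V)) : ℝ :=
  bern G p F * ∏ c : (openSub G F).ConnectedComponent,
    2 * Real.cosh (β * ∑ i ∈ compSupp (openSub G F) c, h i)


lemma spin_walk {G : SimpleGraph V} {F : Finset (Sym2 V)} {σ : V → Bool}
    (hσ : ∀ i j, G.Adj i j → s(i, j) ∈ F → σ i = σ j)
    {i j : V} (w : (openSub G F).Walk i j) : σ i = σ j := by
  induction w with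
  | nil => rfl
  | cons a _ ih => exact (hσ _ _ (a : G.Adj _ _ ∧ _).1 (a : G.Adj _ _ ∧ _).2).trans ih

lemma mem_compSupp [Fintype V] {H : SimpleGraph V} {c : H.ConnectedComponent} {v : V} :
    v ∈ compSupp H c ↔ H.connectedComponentMk v = c := by
  simp [compSupp]

lemma key_sum [Fintype V] [DecidableEq V] (G : SimpleGraph V)
    (β : ℝ) (h : V → ℝ) (F : Finset (Sym2 V)) :
    ∑ σ : V → Bool, Delta G F σ * Real.exp (β * ∑ i, h i * spin (σ i))
      = ∏ c : (openSub G F).ConnectedComponent,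
          2 * Real.cosh (β * ∑ i ∈ compSupp (openSub G F) c, h i) := by
  classical
  set H := openSub G F with hH
  set Φ : (H.ConnectedComponent → Bool) → (V → Bool) :=
    fun f => f ∘ H.connectedComponentMk with hΦ
  have hinj : Function.Injective Φ := by
    intro f g hfg
    funext c
    induction c using SimpleGraph.ConnectedComponent.ind with
    | _ v => exact congrFun hfg v
  have hrange : ∀ σ : V → Bool,
      (∀ i j, G.Adj i j → s(i, j) ∈ F → σ i = σ j) ↔ σ ∈ Finset.univ.image Φ := by
    intro σ
    constructor
    · intro hσ
      refine Finset.mem_image.2 ⟨SimpleGraph.ConnectedComponent.lift σ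
        (fun v w p _ => spin_walk hσ p), Finset.mem_univ _, ?_⟩
      funext v; rfl
    · intro hσ i j _ hmem
      obtain ⟨f, -, rfl⟩ := Finset.mem_image.1 hσ
      have : H.connectedComponentMk i = H.connectedComponentMk j :=
        SimpleGraph.ConnectedComponent.sound (SimpleGraph.Adj.reachable (G := H) (⟨‹G.Adj i j›, hmem⟩ : G.Adj i j ∧ s(i, j) ∈ F))
      simp only [hΦ, Function.comp, this]
  have step1 : ∑ σ : V → Bool, Delta G F σ * Real.exp (β * ∑ i, h i * spin (σ i))
      = ∑ f : H.ConnectedComponent → Bool,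
          Real.exp (β * ∑ i, h i * spin (f (H.connectedComponentMk i))) := by
    have : ∀ σ : V → Bool, Delta G F σ * Real.exp (β * ∑ i, h i * spin (σ i))
        = if σ ∈ Finset.univ.image Φ then Real.exp (β * ∑ i, h i * spin (σ i)) else 0 := by
      intro σ
      unfold Delta
      by_cases hc : ∀ i j, G.Adj i j → s(i, j) ∈ F → σ i = σ j
      · rw [if_pos hc, if_pos ((hrange σ).1 hc), one_mul]
      · rw [if_neg hc, if_neg (fun hm => hc ((hrange σ).2 hm)), zero_mul]
    rw [Finset.sum_congr rfl fun σ _ => this σ, Finset.sum_ite_mem,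
      Finset.univ_inter, Finset.sum_image (fun f _ g _ h => hinj h)]
    rfl
  rw [step1]
  have step2 : ∀ f : H.ConnectedComponent → Bool,
      Real.exp (β * ∑ i, h i * spin (f (H.connectedComponentMk i)))
        = ∏ c : H.ConnectedComponent,
            Real.exp (β * ((∑ i ∈ compSupp H c, h i) * spin (f c))) := by
    intro f
    have hre : (∑ i, h i * spin (f (H.connectedComponentMk i)))
        = ∑ c : H.ConnectedComponent, (∑ i ∈ compSupp H c, h i) * spin (f c) := by
      rw [← Finset.sum_fiberwise_of_maps_to
        (g := H.connectedComponentMk) (fun i _ => Finset.mem_univ _)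
        (fun i => h i * spin (f (H.connectedComponentMk i)))]
      refine Finset.sum_congr rfl fun c _ => ?_
      rw [Finset.sum_mul]
      refine Finset.sum_congr ?_ fun i hi => ?_
      · ext v; simp [mem_compSupp, compSupp]
      · rw [mem_compSupp] at hi
        rw [hi]
    rw [hre, Finset.mul_sum, Real.exp_sum]
  have hps := Fintype.prod_sum
    (fun (c : H.ConnectedComponent) (b : Bool) =>
      Real.exp (β * ((∑ i ∈ compSupp H c, h i) * spin b)))
  rw [Finset.sum_congr rfl fun f _ => step2 f, ← hps]
  refine Finset.prod_congr rfl fun c _ => ?_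
  rw [Fintype.sum_bool]
  have : spin true = 1 := rfl
  have h2 : spin false = -1 := rfl
  rw [this, h2, Real.cosh_eq]
  ring_nf

lemma sum_esW_eq_rcW [Fintype V] [DecidableEq V] (G : SimpleGraph V) [DecidableRel G.Adj]
    (β : ℝ) (p : Sym2 V → ℝ) (h : V → ℝ) (F : Finset (Sym2 V)) :
    (∑ σ : V → Bool, esW G β p h σ F) = rcW G β p h F := by
  unfold esW rcW
  rw [← key_sum G β h F, Finset.mul_sum]
  exact Finset.sum_congr rfl fun σ _ => by ring

/-- Theorem (marginals of the ES measure), part (2): the edge-marginal of the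
Edwards–Sokal measure is the random-cluster measure with external field. -/
theorem statement5 [Fintype V] [DecidableEq V]
    (G : SimpleGraph V) [DecidableRel G.Adj]
    (β : ℝ) (hβ : 0 < β)
    (J : Sym2 V → ℝ) (hJ : ∀ e ∈ G.edgeFinset, 0 ≤ J e)
    (h : V → ℝ)
    (p : Sym2 V → ℝ) (hp : ∀ e, p e = 1 - Real.exp (-(2 * β) * J e))
    (F : Finset (Sym2 V)) (hF : F ⊆ G.edgeFinset) :
    (∑ σ : V → Bool, esW G β p h σ F) /
        (∑ σ : V → Bool, ∑ F' ∈ G.edgeFinset.powerset, esW G β p h σ F')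
      = rcW G β p h F / ∑ F' ∈ G.edgeFinset.powerset, rcW G β p h F' := by
  have hd : (∑ σ : V → Bool, ∑ F' ∈ G.edgeFinset.powerset, esW G β p h σ F')
      = ∑ F' ∈ G.edgeFinset.powerset, rcW G β p h F' := by
    rw [Finset.sum_comm]
    exact Finset.sum_congr rfl fun F' _ => sum_esW_eq_rcW G β p h F'
  rw [sum_esW_eq_rcW G β p h F, hd]

end
end

section
/- Let G=(V,E) be finite, x,y ∈ V distinct, and ω ∈ {0,1}^E such that x and y are not connected in ω. Then Σ_{σ∈{-1,+1}^V} 1_{{σ_x=σ_y}} Δ(σ,ω) exp(β Σ_{i∈V} h_i σ_i) = 2cosh(h(K_t)+h(K_u)) · Π_{α≠t,u} 2cosh(h(K_α)), where K_t, K_u are the (disjoint) connected components of (V,η(ω)) containing x and y respectively, and h(K) = β Σ_{i∈K} h_i. -/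
open Finset

noncomputable section

variable {V : Type}

open scoped Classical in
lemma keyFactor {ι : Type} [Fintype ι] (t u : ι) (htu : t ≠ u) (f : ι → Bool → ℝ) :
    ∑ τ : ι → Bool, (if τ t = τ u then (1 : ℝ) else 0) * ∏ c, f c (τ c)
      = (∑ b : Bool, f t b * f u b) *
        ∏ c ∈ (Finset.univ.erase t).erase u, ∑ b : Bool, f c b := by
  have h1 : ∀ τ : ι → Bool, (if τ t = τ u then (1 : ℝ) else 0)
      = ∑ b : Bool, (if τ t = b then (1:ℝ) else 0) * (if τ u = b then 1 else 0) := by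
    intro τ
    cases ht : τ t <;> cases hu : τ u <;> simp
  calc ∑ τ : ι → Bool, (if τ t = τ u then (1 : ℝ) else 0) * ∏ c, f c (τ c)
      = ∑ τ : ι → Bool, ∑ b : Bool,
          ((if τ t = b then (1:ℝ) else 0) * (if τ u = b then 1 else 0)) * ∏ c, f c (τ c) := by
        simp_rw [h1, Finset.sum_mul]
    _ = ∑ b : Bool, ∑ τ : ι → Bool,
          ((if τ t = b then (1:ℝ) else 0) * (if τ u = b then 1 else 0)) * ∏ c, f c (τ c) :=
        Finset.sum_comm
    _ = ∑ b : Bool, (f t b * f u b) * ∏ c ∈ (Finset.univ.erase t).erase u, ∑ b' : Bool, f c b' := by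
        refine Finset.sum_congr rfl fun b _ => ?_
        set g : ι → Bool → ℝ := fun c b' =>
          if c = t ∨ c = u then (if b' = b then f c b' else 0) else f c b' with hg
        have hgτ : ∀ τ : ι → Bool,
            ((if τ t = b then (1:ℝ) else 0) * (if τ u = b then 1 else 0)) * ∏ c, f c (τ c)
              = ∏ c, g c (τ c) := by
          intro τ
          have : ∀ c, g c (τ c) = f c (τ c) *
              (if c = t ∨ c = u then (if τ c = b then 1 else 0) else 1) := by
            intro c
            by_cases hc : c = t ∨ c = u <;> by_cases hb : τ c = b <;> simp [hg, hc, hb]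
          rw [Finset.prod_congr rfl fun c _ => this c, Finset.prod_mul_distrib]
          have hpe : (∏ c, (if c = t ∨ c = u then (if τ c = b then (1:ℝ) else 0) else 1))
              = (if τ t = b then (1:ℝ) else 0) * (if τ u = b then 1 else 0) := by
            rw [← Finset.prod_subset (Finset.subset_univ ({t, u} : Finset ι))
              (by intro c _ hc; simp at hc; simp [hc])]
            rw [Finset.prod_pair htu]
            simp
          rw [hpe]; ring
        calc ∑ τ : ι → Bool,
              ((if τ t = b then (1:ℝ) else 0) * (if τ u = b then 1 else 0)) * ∏ c, f c (τ c)
            = ∑ τ : ι → Bool, ∏ c, g c (τ c) := Finset.sum_congr rfl fun τ _ => hgτ τ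
          _ = ∏ c, ∑ b' : Bool, g c b' := by
              rw [Finset.prod_univ_sum (fun _ => Finset.univ) g, Fintype.piFinset_univ]
          _ = (f t b * f u b) * ∏ c ∈ (Finset.univ.erase t).erase u, ∑ b' : Bool, f c b' := by
              rw [← Finset.mul_prod_erase Finset.univ _ (Finset.mem_univ t),
                ← Finset.mul_prod_erase (Finset.univ.erase t) _
                  (Finset.mem_erase.mpr ⟨(Ne.symm htu), Finset.mem_univ u⟩)]
              have ht' : (∑ b' : Bool, g t b') = f t b := by simp [hg]
              have hu' : (∑ b' : Bool, g u b') = f u b := by simp [hg, Ne.symm htu]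
              have hrest : ∀ c ∈ (Finset.univ.erase t).erase u,
                  (∑ b' : Bool, g c b') = ∑ b' : Bool, f c b' := by
                intro c hc
                simp only [Finset.mem_erase] at hc
                simp [hg, hc.1, hc.2.1]
              rw [ht', hu', Finset.prod_congr rfl hrest]; ring
    _ = (∑ b : Bool, f t b * f u b) *
        ∏ c ∈ (Finset.univ.erase t).erase u, ∑ b : Bool, f c b := by
        rw [← Finset.sum_mul]

open scoped Classical in
/-- Lemma (lema28fev): if `x` and `y` are not connected in `ω`, the sum over
spin configurations with `σ_x = σ_y` factorizes, with the components of `x`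
and `y` merging into a single `2cosh(h(K_t)+h(K_u))` factor. -/
theorem statement7 [Fintype V] [DecidableEq V]
    (G : SimpleGraph V) [DecidableRel G.Adj]
    (β : ℝ) (hβ : 0 < β) (h : V → ℝ)
    (x y : V) (hxy : x ≠ y)
    (F : Finset (Sym2 V)) (hF : F ⊆ G.edgeFinset)
    (hnc : ¬ (openSub G F).Reachable x y) :
    ∑ σ : V → Bool,
        (if σ x = σ y then (1 : ℝ) else 0) * Delta G F σ *
          Real.exp (β * ∑ i, h i * spin (σ i))
      = 2 * Real.cosh
            ((β * ∑ i ∈ compSupp (openSub G F)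
                ((openSub G F).connectedComponentMk x), h i)
              + β * ∑ i ∈ compSupp (openSub G F)
                ((openSub G F).connectedComponentMk y), h i) *
          ∏ c ∈ (Finset.univ.erase
              ((openSub G F).connectedComponentMk x)).erase
              ((openSub G F).connectedComponentMk y),
            2 * Real.cosh (β * ∑ i ∈ compSupp (openSub G F) c, h i) := by
  classical
  set H : SimpleGraph V := openSub G F with hH
  set q : V → H.ConnectedComponent := H.connectedComponentMk with hqdef
  have hcxcy : q x ≠ q y := fun e => hnc (SimpleGraph.ConnectedComponent.eq.mp e)
  set a : H.ConnectedComponent → ℝ := fun c => β * ∑ i ∈ compSupp H c, h i with ha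
  -- characterization of Delta
  have hiff : ∀ σ : V → Bool,
      (∀ i j, G.Adj i j → s(i, j) ∈ F → σ i = σ j) ↔ (∀ i j, q i = q j → σ i = σ j) := by
    intro σ
    constructor
    · intro hσ i j hqij
      have hr := SimpleGraph.ConnectedComponent.eq.mp hqij
      clear hqij
      obtain ⟨w⟩ := hr
      induction w with
      | nil => rfl
      | cons hadj p ih => exact (hσ _ _ hadj.1 hadj.2).trans ih
    · intro hσ i j hadj hmem
      exact hσ i j (SimpleGraph.ConnectedComponent.eq.mpr
        (SimpleGraph.Adj.reachable (show H.Adj i j from ⟨hadj, hmem⟩)))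
  have hDelta : ∀ σ : V → Bool,
      Delta G F σ = if (∀ i j, q i = q j → σ i = σ j) then 1 else 0 := by
    intro σ
    unfold Delta
    by_cases hc : ∀ i j, q i = q j → σ i = σ j
    · rw [if_pos ((hiff σ).mpr hc), if_pos hc]
    · rw [if_neg (fun hh => hc ((hiff σ).mp hh)), if_neg hc]
  -- compSupp as a filter
  have hcomp : ∀ c : H.ConnectedComponent,
      compSupp H c = Finset.univ.filter fun v => q v = c := by
    intro c
    unfold compSupp
    rfl
  -- step 1 : restrict to configurations constant on components
  have step1 : ∑ σ : V → Bool,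
        (if σ x = σ y then (1 : ℝ) else 0) * Delta G F σ *
          Real.exp (β * ∑ i, h i * spin (σ i))
      = ∑ σ ∈ Finset.univ.filter (fun σ : V → Bool => ∀ i j, q i = q j → σ i = σ j),
          (if σ x = σ y then (1 : ℝ) else 0) * Real.exp (β * ∑ i, h i * spin (σ i)) := by
    rw [Finset.sum_filter]
    refine Finset.sum_congr rfl fun σ _ => ?_
    rw [hDelta σ]
    by_cases hP : ∀ i j, q i = q j → σ i = σ j <;> simp [hP]
  -- step 2 : bijection with component-spin configurations
  have step2 : ∑ σ ∈ Finset.univ.filter (fun σ : V → Bool => ∀ i j, q i = q j → σ i = σ j),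
          (if σ x = σ y then (1 : ℝ) else 0) * Real.exp (β * ∑ i, h i * spin (σ i))
      = ∑ τ : H.ConnectedComponent → Bool,
          (if τ (q x) = τ (q y) then (1 : ℝ) else 0) *
            Real.exp (β * ∑ i, h i * spin (τ (q i))) := by
    refine Finset.sum_bij' (fun σ _ => fun c => σ (Quot.out c))
      (fun τ _ => fun v => τ (q v)) (fun σ hσ => Finset.mem_univ _) ?_ ?_ ?_ ?_
    · intro τ _
      simp only [Finset.mem_filter, Finset.mem_univ, true_and]
      intro i j hij
      rw [hij]
    · intro σ hσ
      simp only [Finset.mem_filter, Finset.mem_univ, true_and] at hσ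
      funext v
      exact hσ _ _ (Quot.out_eq (q v))
    · intro τ _
      funext c
      show τ (q (Quot.out c)) = τ c
      rw [show q (Quot.out c) = c from Quot.out_eq c]
    · intro σ hσ
      simp only [Finset.mem_filter, Finset.mem_univ, true_and] at hσ
      have hout : ∀ v, σ (Quot.out (q v)) = σ v := fun v => hσ _ _ (Quot.out_eq (q v))
      simp_rw [hout]
  -- step 3 : factor the exponential over components
  have step3 : ∀ τ : H.ConnectedComponent → Bool,
      Real.exp (β * ∑ i, h i * spin (τ (q i))) = ∏ c, Real.exp (a c * spin (τ c)) := by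
    intro τ
    rw [← Real.exp_sum]
    congr 1
    rw [← Finset.sum_fiberwise Finset.univ q (fun i => h i * spin (τ (q i))),
      Finset.mul_sum]
    refine Finset.sum_congr rfl fun c _ => ?_
    have : ∑ i ∈ Finset.univ.filter (fun i => q i = c), h i * spin (τ (q i))
        = ∑ i ∈ Finset.univ.filter (fun i => q i = c), h i * spin (τ c) := by
      refine Finset.sum_congr rfl fun i hi => ?_
      rw [(Finset.mem_filter.mp hi).2]
    rw [this, ← Finset.sum_mul]
    simp only [ha, hcomp]
    ring
  have step4 : ∑ τ : H.ConnectedComponent → Bool,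
          (if τ (q x) = τ (q y) then (1 : ℝ) else 0) *
            Real.exp (β * ∑ i, h i * spin (τ (q i)))
      = ∑ τ : H.ConnectedComponent → Bool,
          (if τ (q x) = τ (q y) then (1 : ℝ) else 0) *
            ∏ c, Real.exp (a c * spin (τ c)) := by
    exact Finset.sum_congr rfl fun τ _ => by rw [step3 τ]
  rw [step1, step2, step4, keyFactor (q x) (q y) hcxcy (fun c b => Real.exp (a c * spin b))]
  have hpair : (∑ b : Bool, Real.exp (a (q x) * spin b) * Real.exp (a (q y) * spin b))
      = 2 * Real.cosh (a (q x) + a (q y)) := by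
    rw [Real.cosh_eq]
    simp [spin, ← Real.exp_add]
    ring
  have hsingle : ∀ c : H.ConnectedComponent,
      (∑ b : Bool, Real.exp (a c * spin b)) = 2 * Real.cosh (a c) := by
    intro c
    rw [Real.cosh_eq]
    simp [spin]
    ring
  rw [hpair]
  congr 1
  exact Finset.prod_congr rfl fun c _ => hsingle c

end
end

section
/- FKG auxiliary inequality (case III, free boundary): if (a_m)_{m=1}^q, (b_m)_{m=1}^q are positive sequences with b_m ≤ b_max for all m, h-indexing such that a_m, b_m ≤ their maxima, and the weights q_m > 0 satisfy Σ_{m ∈ Q} q_m ≥ 1 where Q = {m : a_m = a_max and b_m = b_max}, then (Σ_{m=1}^q q_m a_m)(Σ_{m'=1}^q q_{m'} b_{m'}) ≥ Σ_{m=1}^q q_m a_m b_m. -/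
open Finset

open scoped Classical in
/-- FKG auxiliary inequality (case III, free boundary): if the total weight of
the indices where both `a` and `b` attain their maxima is at least `1`, then
`(Σ_m q_m a_m)(Σ_m q_m b_m) ≥ Σ_m q_m a_m b_m`. -/
theorem statement15 (q : ℕ) (hq : 0 < q)
    (a b w : Fin q → ℝ)
    (ha : ∀ m, 0 < a m) (hb : ∀ m, 0 < b m) (hw : ∀ m, 0 < w m)
    (hQ : 1 ≤ ∑ m ∈ Finset.univ.filter
        (fun m => (∀ k, a k ≤ a m) ∧ ∀ k, b k ≤ b m), w m) :
    ∑ m, w m * (a m * b m) ≤ (∑ m, w m * a m) * ∑ m, w m * b m := by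
  set Q := Finset.univ.filter
      (fun m => (∀ k, a k ≤ a m) ∧ ∀ k, b k ≤ b m) with hQdef
  have hQne : Q.Nonempty := by
    by_contra h
    rw [Finset.not_nonempty_iff_eq_empty] at h
    rw [h, Finset.sum_empty] at hQ
    linarith
  obtain ⟨m0, hm0⟩ := hQne
  have hm0' := (Finset.mem_filter.mp hm0).2
  have h1 : ∑ m, w m * (a m * b m) ≤ a m0 * ∑ m, w m * b m := by
    rw [Finset.mul_sum]
    apply Finset.sum_le_sum
    intro i _
    have : w i * (a i * b i) = a i * (w i * b i) := by ring
    rw [this]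
    exact mul_le_mul_of_nonneg_right (hm0'.1 i)
      (le_of_lt (mul_pos (hw i) (hb i)))
  have h2 : a m0 ≤ ∑ m, w m * a m := by
    have hsub : ∑ m ∈ Q, w m * a m ≤ ∑ m, w m * a m := by
      apply Finset.sum_le_sum_of_subset_of_nonneg (Finset.subset_univ Q)
      intro i _ _
      exact le_of_lt (mul_pos (hw i) (ha i))
    have heq : ∑ m ∈ Q, w m * a m = (∑ m ∈ Q, w m) * a m0 := by
      rw [Finset.sum_mul]
      apply Finset.sum_congr rfl
      intro i hi
      have hi' := (Finset.mem_filter.mp hi).2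
      have : a i = a m0 := le_antisymm (hm0'.1 i) (hi'.1 m0)
      rw [this]
    have : a m0 ≤ (∑ m ∈ Q, w m) * a m0 :=
      le_mul_of_one_le_left (le_of_lt (ha m0)) hQ
    linarith
  calc ∑ m, w m * (a m * b m) ≤ a m0 * ∑ m, w m * b m := h1
    _ ≤ (∑ m, w m * a m) * ∑ m, w m * b m :=
        mul_le_mul_of_nonneg_right h2
          (Finset.sum_nonneg fun i _ => le_of_lt (mul_pos (hw i) (hb i)))
end
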